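/- Let G be a finite abelian group with exp(G) + 1 = D(G). Then G is isomorphic to C₂ ⊕ C_{2n} for some n ≥ 1 (i.e., G has rank 2 with smaller invariant equal to 2). -/
import Mathlib


open Multiset

/-- A minimal zero-sum sequence over `G`: a nonempty zero-sum sequence with no
proper nonempty zero-sum subsequence. -/
def IsMinZeroSum {G : Type*} [AddCommGroup G] (S : Multiset G) : Prop :=
  S ≠ 0 ∧ S.sum = 0 ∧ ∀ T : Multiset G, T ≤ S → T ≠ 0 → T ≠ S → T.sum ≠ 0

/-- The Davenport constant of `G`: the maximal length of a minimal zero-sum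
sequence over `G`. -/
noncomputable def DavenportConstant (G : Type*) [AddCommGroup G] : ℕ :=
  sSup {n : ℕ | ∃ S : Multiset G, IsMinZeroSum S ∧ Multiset.card S = n}

/-- The set of lengths of a zero-sum sequence `A`: the set of all `k` such that
`A` can be written as a product of `k` minimal zero-sum sequences. -/
def LengthsSet {G : Type*} [AddCommGroup G] (A : Multiset G) : Set ℕ :=
  {k : ℕ | ∃ f : Multiset (Multiset G), Multiset.card f = k ∧
    (∀ S ∈ f, IsMinZeroSum S) ∧ f.sum = A}

/-- A factorization of a zero-sum sequence `A` into minimal zero-sum sequences. -/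
def IsFactorization {G : Type*} [AddCommGroup G] (A : Multiset G)
    (z : Multiset (Multiset G)) : Prop :=
  (∀ S ∈ z, IsMinZeroSum S) ∧ z.sum = A

/-- The distance between two factorizations. -/
def factDist {G : Type*} [AddCommGroup G] [DecidableEq G]
    (z z' : Multiset (Multiset G)) : ℕ :=
  max (Multiset.card (z - z')) (Multiset.card (z' - z))

/-- The catenary degree of the monoid of zero-sum sequences over `G`: the smallest
`N` such that any two factorizations of an element can be connected by a chain of
factorizations in which consecutive members have distance at most `N`. -/
noncomputable def CatenaryDegree (G : Type*) [AddCommGroup G] [DecidableEq G] : ℕ :=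
  sInf {N : ℕ | ∀ (A : Multiset G) (z z' : Multiset (Multiset G)),
    IsFactorization A z → IsFactorization A z' →
    Relation.ReflTransGen (fun x y => IsFactorization A y ∧ factDist x y ≤ N) z z'}

/-- The invariant `ℸ(G) = sup { min (L \ {2}) : 2 ∈ L ∈ 𝓛(G) }`. -/
noncomputable def Daleth (G : Type*) [AddCommGroup G] : ℕ :=
  sSup {m : ℕ | ∃ A : Multiset G, A.sum = 0 ∧ 2 ∈ LengthsSet A ∧
    (LengthsSet A \ {2}).Nonempty ∧ m = sInf (LengthsSet A \ {2})}

set_option linter.unusedSectionVars false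

lemma counts3 {G : Type*} [DecidableEq G] {u v w : G} (huv : u ≠ v) (huw : u ≠ w)
    (hvw : v ≠ w) {p q r : ℕ} {T : Multiset G}
    (hT : T ≤ replicate p u + replicate q v + replicate r w) :
    ∃ a b c, a ≤ p ∧ b ≤ q ∧ c ≤ r ∧
      T = replicate a u + replicate b v + replicate c w := by
  refine ⟨T.count u, T.count v, T.count w, ?_, ?_, ?_, ?_⟩
  · simpa [count_replicate, huv, huw, hvw, huv.symm, huw.symm, hvw.symm] using
      Multiset.count_le_of_le u hT
  · simpa [count_replicate, huv, huw, hvw, huv.symm, huw.symm, hvw.symm] using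
      Multiset.count_le_of_le v hT
  · simpa [count_replicate, huv, huw, hvw, huv.symm, huw.symm, hvw.symm] using
      Multiset.count_le_of_le w hT
  · ext z
    by_cases hzu : z = u
    · subst hzu; simp [count_replicate, huv, huw, huv.symm, huw.symm]
    by_cases hzv : z = v
    · subst hzv; simp [count_replicate, huv, hvw, huv.symm, hvw.symm]
    by_cases hzw : z = w
    · subst hzw; simp [count_replicate, huw, hvw, huw.symm, hvw.symm]
    · have := Multiset.count_le_of_le z hT
      simp [count_replicate, hzu, hzv, hzw, Ne.symm hzu, Ne.symm hzv, Ne.symm hzw]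
        at this ⊢
      exact this

lemma counts4 {G : Type*} [DecidableEq G] {u v w t : G} (huv : u ≠ v) (huw : u ≠ w)
    (hut : u ≠ t) (hvw : v ≠ w) (hvt : v ≠ t) (hwt : w ≠ t)
    {p q r s : ℕ} {T : Multiset G}
    (hT : T ≤ replicate p u + replicate q v + replicate r w + replicate s t) :
    ∃ a b c d, a ≤ p ∧ b ≤ q ∧ c ≤ r ∧ d ≤ s ∧
      T = replicate a u + replicate b v + replicate c w + replicate d t := by
  refine ⟨T.count u, T.count v, T.count w, T.count t, ?_, ?_, ?_, ?_, ?_⟩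
  · simpa [count_replicate, huv, huw, hut, hvw, hvt, hwt,
      huv.symm, huw.symm, hut.symm, hvw.symm, hvt.symm, hwt.symm] using
      Multiset.count_le_of_le u hT
  · simpa [count_replicate, huv, huw, hut, hvw, hvt, hwt,
      huv.symm, huw.symm, hut.symm, hvw.symm, hvt.symm, hwt.symm] using
      Multiset.count_le_of_le v hT
  · simpa [count_replicate, huv, huw, hut, hvw, hvt, hwt,
      huv.symm, huw.symm, hut.symm, hvw.symm, hvt.symm, hwt.symm] using
      Multiset.count_le_of_le w hT
  · simpa [count_replicate, huv, huw, hut, hvw, hvt, hwt,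
      huv.symm, huw.symm, hut.symm, hvw.symm, hvt.symm, hwt.symm] using
      Multiset.count_le_of_le t hT
  · ext z
    by_cases hzu : z = u
    · subst hzu; simp [count_replicate, huv, huw, hut, huv.symm, huw.symm, hut.symm]
    by_cases hzv : z = v
    · subst hzv; simp [count_replicate, huv, hvw, hvt, huv.symm, hvw.symm, hvt.symm]
    by_cases hzw : z = w
    · subst hzw; simp [count_replicate, huw, hvw, hwt, huw.symm, hvw.symm, hwt.symm]
    by_cases hzt : z = t
    · subst hzt; simp [count_replicate, hut, hvt, hwt, hut.symm, hvt.symm, hwt.symm]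
    · have := Multiset.count_le_of_le z hT
      simp [count_replicate, hzu, hzv, hzw, hzt,
        Ne.symm hzu, Ne.symm hzv, Ne.symm hzw, Ne.symm hzt] at this ⊢
      exact this

theorem minCard {G : Type*} [AddCommGroup G] [Fintype G] {S : Multiset G}
    (hS : IsMinZeroSum S) : Multiset.card S ≤ Fintype.card G := by
  classical
  by_contra hlt
  push_neg at hlt
  set l := S.toList with hlt'
  have hlS : (l : Multiset G) = S := Multiset.coe_toList S
  have hk : l.length = Multiset.card S := by rw [← hlS]; simp
  set k := l.length with hk'
  have key : ∀ i j : ℕ, i ∈ Finset.Icc 1 k → j ∈ Finset.Icc 1 k → i < j →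
      (l.take i).sum = (l.take j).sum → False := by
    intro i j hi hj hij hsum
    simp only [Finset.mem_Icc] at hi hj
    set seg := (l.drop i).take (j - i) with hseg
    have hsub : List.Sublist seg l :=
      ((List.take_prefix (j-i) (l.drop i)).sublist).trans (List.drop_suffix i l).sublist
    have hTle : (seg : Multiset G) ≤ S := by
      rw [← hlS]; exact Multiset.coe_le.mpr hsub.subperm
    have hlen : seg.length = j - i := by
      rw [hseg, List.length_take, List.length_drop]
      omega
    have hTne : (seg : Multiset G) ≠ 0 := by
      rw [← Multiset.card_pos]
      simp [hlen]; omega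
    have hTneS : (seg : Multiset G) ≠ S := by
      intro hcon
      have := congrArg Multiset.card hcon
      simp [hlen, ← hk] at this
      omega
    have hTsum : (seg : Multiset G).sum = 0 := by
      have : l.take j = l.take i ++ seg := by
        rw [hseg, ← List.take_add]
        congr 1
        omega
      rw [this, List.sum_append] at hsum
      simpa using hsum.symm
    exact hS.2.2 _ hTle hTne hTneS hTsum
  have hmaps : ∀ i ∈ Finset.Icc 1 k, (l.take i).sum ∈ (Finset.univ : Finset G) := by
    intro i _; exact Finset.mem_univ _
  obtain ⟨i, hi, j, hj, hne, heq⟩ :=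
    Finset.exists_ne_map_eq_of_card_lt_of_maps_to
      (by simpa [Nat.card_Icc, hk] using hlt) hmaps
  rcases hne.lt_or_gt with h | h
  · exact key i j hi hj h heq
  · exact key j i hj hi h heq.symm

section AuxStatement18
variable {G : Type*} [AddCommGroup G] [Fintype G] {g : G} {e m : ℕ}

/-- lift lemma -/
lemma lift_lem (hg : addOrderOf g = e) (he : ∀ z : G, e • z = 0) (hepos : 0 < e)
    (x₀ : G) :
    ∃ x : G, QuotientAddGroup.mk' (AddSubgroup.zmultiples g) x
        = QuotientAddGroup.mk' (AddSubgroup.zmultiples g) x₀ ∧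
      (addOrderOf (QuotientAddGroup.mk' (AddSubgroup.zmultiples g) x₀)) • x = 0 := by
  set C := AddSubgroup.zmultiples g with hC
  set π := QuotientAddGroup.mk' C with hπ
  set m := addOrderOf (π x₀) with hm
  have hme : m ∣ e := by
    apply addOrderOf_dvd_of_nsmul_eq_zero
    rw [← _root_.map_nsmul, he x₀, _root_.map_zero]
  have hmpos : 0 < m := Nat.pos_of_dvd_of_pos hme hepos
  have hmem : m • x₀ ∈ C := by
    have : π (m • x₀) = 0 := by
      rw [_root_.map_nsmul]
      exact addOrderOf_nsmul_eq_zero (π x₀)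
    rwa [hπ, QuotientAddGroup.mk'_apply, QuotientAddGroup.eq_zero_iff] at this
  obtain ⟨k, hk⟩ := (AddSubgroup.mem_zmultiples_iff).mp hmem
  obtain ⟨m', hm'⟩ := hme
  have hm'pos : 0 < m' := by
    by_contra hcon
    push_neg at hcon
    interval_cases m'
    omega
  have h0 : ((m' : ℤ) * k) • g = 0 := by
    have h1 : (m' : ℕ) • (m • x₀) = 0 := by
      rw [← mul_nsmul, ← hm', he x₀]
    rw [← hk, ← natCast_zsmul, smul_smul] at h1
    exact h1
  have hdvd : (m : ℤ) ∣ k := by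
    have h1 : ((m : ℤ) * (m' : ℤ)) ∣ (m' : ℤ) * k := by
      rw [← addOrderOf_dvd_iff_zsmul_eq_zero, hg, hm'] at h0
      exact_mod_cast h0
    rw [mul_comm (m : ℤ) (m' : ℤ)] at h1
    exact (mul_dvd_mul_iff_left (by exact_mod_cast hm'pos.ne' : (m' : ℤ) ≠ 0)).mp h1
  obtain ⟨k₀, hk₀⟩ := hdvd
  refine ⟨x₀ - k₀ • g, ?_, ?_⟩
  · rw [map_sub, sub_eq_self, hπ, QuotientAddGroup.mk'_apply, QuotientAddGroup.eq_zero_iff]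
    exact AddSubgroup.mem_zmultiples_iff.mpr ⟨k₀, rfl⟩
  · rw [smul_sub, sub_eq_zero, ← hk, hk₀, ← natCast_zsmul, smul_smul]

lemma cons1 {x : G} (hg : addOrderOf g = e) (he2 : 2 ≤ e)
    (hxC : x ∉ AddSubgroup.zmultiples g)
    (hm : addOrderOf (QuotientAddGroup.mk' (AddSubgroup.zmultiples g) x) = m)
    (hmx : m • x = 0) (hm2 : 2 ≤ m) :
    IsMinZeroSum (replicate (m-1) x + replicate (e-1) g + replicate 1 (x+g)) ∧
      Multiset.card (replicate (m-1) x + replicate (e-1) g + replicate 1 (x+g))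
        = e + m - 1 := by
  classical
  set C := AddSubgroup.zmultiples g with hC
  set π := QuotientAddGroup.mk' C with hπ
  have hgC : g ∈ C := AddSubgroup.mem_zmultiples g
  have hπg : π g = 0 := by
    rw [hπ, QuotientAddGroup.mk'_apply, QuotientAddGroup.eq_zero_iff]; exact hgC
  have hπx : π x ≠ 0 := by
    rw [hπ, QuotientAddGroup.mk'_apply, ne_eq, QuotientAddGroup.eq_zero_iff]; exact hxC
  have hg0 : g ≠ 0 := by
    intro hcon; rw [hcon, addOrderOf_zero] at hg; omega
  have heg : e • g = 0 := by rw [← hg]; exact addOrderOf_nsmul_eq_zero g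
  -- distinctness
  have hxg : x ≠ g := fun hcon => hxC (hcon ▸ hgC)
  have hxxg : x ≠ x + g := by
    intro hcon
    exact hg0 (by linear_combination (norm := abel) -hcon)
  have hgxg : g ≠ x + g := by
    intro hcon
    exact hxC (by have : x = 0 := by linear_combination (norm := abel) -hcon
                  rw [this]; exact C.zero_mem)
  constructor; swap
  · simp
    omega
  refine ⟨?_, ?_, ?_⟩
  · intro hcon
    have := congrArg Multiset.card hcon
    simp at this
  · have h1 : (m-1) • x + x = m • x := by
      rw [← succ_nsmul]
      congr 1
      omega
    have h2 : (e-1) • g + g = e • g := by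
      rw [← succ_nsmul]
      congr 1
      omega
    simp only [sum_add, sum_replicate, replicate_one, sum_singleton]
    calc (m-1) • x + (e-1) • g + (x + g) = ((m-1) • x + x) + ((e-1) • g + g) := by abel
    _ = 0 := by rw [h1, h2, hmx, heg, add_zero]
  · intro T hle hne hneS hsum
    obtain ⟨a, b, c, ha, hb, hc, hT⟩ := counts3 hxg hxxg hgxg hle
    have hsum' : (a + c) • x + (b + c) • g = 0 := by
      rw [hT] at hsum
      simp only [sum_add, sum_replicate] at hsum
      calc (a + c) • x + (b + c) • g
          = a • x + b • g + c • (x + g) := by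
            simp only [add_nsmul, nsmul_add]; abel
        _ = 0 := hsum
    have hq : (a + c) • π x = 0 := by
      have := congrArg π hsum'
      rw [_root_.map_zero, _root_.map_add, _root_.map_nsmul, _root_.map_nsmul, hπg,
        smul_zero, add_zero] at this
      exact this
    have hdvd : m ∣ a + c := by
      rw [← hm]
      exact addOrderOf_dvd_of_nsmul_eq_zero hq
    have hac : a + c = 0 ∨ a + c = m := by
      rcases Nat.eq_zero_or_pos (a + c) with h | h
      · exact Or.inl h
      · exact Or.inr (Nat.le_antisymm (by omega) (Nat.le_of_dvd h hdvd))
    rcases hac with hac | hac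
    · -- a = c = 0, so b • g = 0, b < e forces b = 0, T = 0
      have ha0 : a = 0 := by omega
      have hc0 : c = 0 := by omega
      have hbg : b • g = 0 := by
        rw [ha0, hc0] at hsum'; simpa using hsum'
      have : e ∣ b := by rw [← hg]; exact addOrderOf_dvd_of_nsmul_eq_zero hbg
      have hb0 : b = 0 := by
        rcases Nat.eq_zero_or_pos b with h | h
        · exact h
        · have := Nat.le_of_dvd h this; omega
      apply hne
      rw [hT, ha0, hb0, hc0]
      simp
    · -- a + c = m
      have hacx : (a + c) • x = 0 := by rw [hac]; exact hmx
      have hbg : (b + c) • g = 0 := by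
        rw [hacx, zero_add] at hsum'; exact hsum'
      have : e ∣ b + c := by rw [← hg]; exact addOrderOf_dvd_of_nsmul_eq_zero hbg
      have hbc : b + c = e := by
        rcases Nat.eq_zero_or_pos (b + c) with h | h
        · omega
        · have := Nat.le_of_dvd h this; omega
      have : a = m - 1 ∧ b = e - 1 ∧ c = 1 := by omega
      apply hneS
      rw [hT, this.1, this.2.1, this.2.2]

lemma cons2 {x y : G} (hg : addOrderOf g = e) (he2 : 2 ≤ e)
    (hxC : x ∉ AddSubgroup.zmultiples g) (hyC : y ∉ AddSubgroup.zmultiples g)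
    (hxy : QuotientAddGroup.mk' (AddSubgroup.zmultiples g) x
      ≠ QuotientAddGroup.mk' (AddSubgroup.zmultiples g) y)
    (h2x : 2 • x = 0) (h2y : 2 • y = 0) :
    IsMinZeroSum (replicate 1 x + replicate 1 y + replicate 1 (x+y+g)
        + replicate (e-1) g) ∧
      Multiset.card (replicate 1 x + replicate 1 y + replicate 1 (x+y+g)
        + replicate (e-1) g) = e + 2 := by
  classical
  set C := AddSubgroup.zmultiples g with hC
  set π := QuotientAddGroup.mk' C with hπ
  have hgC : g ∈ C := AddSubgroup.mem_zmultiples g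
  have hπ0 : ∀ z : G, π z = 0 ↔ z ∈ C := by
    intro z
    rw [hπ, QuotientAddGroup.mk'_apply, QuotientAddGroup.eq_zero_iff]
  have hπg : π g = 0 := (hπ0 g).mpr hgC
  have hπx : π x ≠ 0 := fun hcon => hxC ((hπ0 x).mp hcon)
  have hπy : π y ≠ 0 := fun hcon => hyC ((hπ0 y).mp hcon)
  have h2πx : 2 • π x = 0 := by
    rw [← _root_.map_nsmul, h2x, _root_.map_zero]
  have h2πy : 2 • π y = 0 := by
    rw [← _root_.map_nsmul, h2y, _root_.map_zero]
  have hnegy : -π y = π y := neg_eq_of_add_eq_zero_left (by rw [← two_nsmul]; exact h2πy)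
  have hπxy : π x + π y ≠ 0 := by
    intro hcon
    exact hxy (by rw [← neg_eq_of_add_eq_zero_left hcon, hnegy])
  have heg : e • g = 0 := by rw [← hg]; exact addOrderOf_nsmul_eq_zero g
  have hg0 : g ≠ 0 := by
    intro hcon; rw [hcon, addOrderOf_zero] at hg; omega
  -- distinctness
  have d1 : x ≠ y := fun hcon => hxy (by rw [hcon])
  have d2 : x ≠ x + y + g := by
    intro hcon
    have hyg : y + g = 0 := by linear_combination (norm := abel) -hcon
    have : y = -g := by linear_combination (norm := abel) hyg
    exact hyC (this ▸ C.neg_mem hgC)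
  have d3 : x ≠ g := fun hcon => hxC (hcon ▸ hgC)
  have d4 : y ≠ x + y + g := by
    intro hcon
    have hxg : x + g = 0 := by linear_combination (norm := abel) -hcon
    have : x = -g := by linear_combination (norm := abel) hxg
    exact hxC (this ▸ C.neg_mem hgC)
  have d5 : y ≠ g := fun hcon => hyC (hcon ▸ hgC)
  have d6 : x + y + g ≠ g := by
    intro hcon
    have : x = -y := by linear_combination (norm := abel) hcon
    apply hπxy
    rw [this, _root_.map_neg, hnegy, ← two_nsmul]
    exact h2πy
  constructor; swap
  · simp; omega
  refine ⟨?_, ?_, ?_⟩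
  · intro hcon
    have := congrArg Multiset.card hcon
    simp at this
  · have h2 : (e-1) • g + g = e • g := by
      rw [← succ_nsmul]; congr 1; omega
    simp only [sum_add, sum_replicate, replicate_one, sum_singleton]
    calc x + y + (x+y+g) + (e-1) • g
        = (2 • x) + (2 • y) + ((e-1) • g + g) := by
          simp only [two_nsmul]; abel
      _ = 0 := by rw [h2x, h2y, h2, heg]; simp
  · intro T hle hne hneS hsum
    obtain ⟨a, b, c, d, ha, hb, hc, hd, hT⟩ := counts4 d1 d2 d3 d4 d5 (Ne.symm d6).symm hle
    have hsum' : (a + c) • x + (b + c) • y + (c + d) • g = 0 := by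
      rw [hT] at hsum
      simp only [sum_add, sum_replicate] at hsum
      calc (a + c) • x + (b + c) • y + (c + d) • g
          = a • x + b • y + c • (x + y + g) + d • g := by
            simp only [add_nsmul, nsmul_add]; abel
        _ = 0 := hsum
    have hq : (a + c) • π x + (b + c) • π y = 0 := by
      have := congrArg π hsum'
      rw [_root_.map_zero, _root_.map_add, _root_.map_add, _root_.map_nsmul,
        _root_.map_nsmul, _root_.map_nsmul, hπg, smul_zero, add_zero] at this
      exact this
    interval_cases a <;> interval_cases b <;> interval_cases c <;> try
      simp only [zero_add, add_zero, one_smul, zero_smul, one_nsmul, zero_nsmul] at hq hsum'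
    · -- a=b=c=0 : d • g = 0
      have : e ∣ d := by rw [← hg]; exact addOrderOf_dvd_of_nsmul_eq_zero hsum'
      have hd0 : d = 0 := by
        rcases Nat.eq_zero_or_pos d with h | h
        · exact h
        · have := Nat.le_of_dvd h this; omega
      exact hne (by rw [hT, hd0]; simp)
    · -- a=0,b=0,c=1
      exact absurd hq hπxy
    · -- a=0,b=1,c=0
      exact absurd hq hπy
    · -- a=0,b=1,c=1 : π x + 2 π y = π x
      rw [show (1+1)•π y = 2 • π y from rfl, h2πy, add_zero] at hq
      exact absurd hq hπx
    · -- a=1,b=0,c=0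
      exact absurd hq hπx
    · -- a=1,b=0,c=1 : 2πx + πy = πy = 0
      rw [show (1+1)•π x = 2 • π x from rfl, h2πx, zero_add] at hq
      exact absurd hq hπy
    · -- a=1,b=1,c=0 : πx + πy = 0
      exact absurd hq hπxy
    · -- a=1,b=1,c=1 : fine; use hsum'
      have hgg : (1 + d) • g = 0 := by
        have : (1+1) • x + (1+1) • y + (1 + d) • g = 0 := hsum'
        rw [show (1+1)•x = 2 • x from rfl, show (1+1)•y = 2 • y from rfl, h2x, h2y,
          zero_add, zero_add] at this
        exact this
      have : e ∣ 1 + d := by rw [← hg]; exact addOrderOf_dvd_of_nsmul_eq_zero hgg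
      have hd1 : d = e - 1 := by
        have h1 := Nat.le_of_dvd (by omega) this
        omega
      exact hneS (by rw [hT, hd1])

end AuxStatement18

theorem statement18 {G : Type*} [AddCommGroup G] [Fintype G]
    (h : AddMonoid.exponent G + 1 = DavenportConstant G) :
    ∃ n : ℕ, 1 ≤ n ∧ Nonempty (G ≃+ ZMod 2 × ZMod (2 * n)) := by
  classical
  have hEE : AddMonoid.ExponentExists G := AddMonoid.ExponentExists.of_finite
  set e := AddMonoid.exponent G with he_def
  have hepos : 0 < e := hEE.exponent_pos
  have hesmul : ∀ z : G, e • z = 0 := fun z => AddMonoid.exponent_nsmul_eq_zero z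
  obtain ⟨g, hg⟩ := AddMonoid.exists_addOrderOf_eq_exponent hEE
  rw [← he_def] at hg
  set C := AddSubgroup.zmultiples g with hC
  set π := QuotientAddGroup.mk' C with hπ
  have hπ0 : ∀ z : G, π z = 0 ↔ z ∈ C := fun z => by
    rw [hπ, QuotientAddGroup.mk'_apply, QuotientAddGroup.eq_zero_iff]
  -- Davenport bounds
  have hDne : {n : ℕ | ∃ S : Multiset G, IsMinZeroSum S ∧ Multiset.card S = n}.Nonempty := by
    refine ⟨1, {0}, ⟨?_, ?_, ?_⟩, by simp⟩
    · simp
    · simp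
    · intro T hle hne hneS
      rcases Multiset.le_singleton.mp hle with h0 | h0
      · exact absurd h0 hne
      · exact absurd h0 hneS
  have hbdd : BddAbove {n : ℕ | ∃ S : Multiset G, IsMinZeroSum S ∧ Multiset.card S = n} := by
    refine ⟨Fintype.card G, ?_⟩
    rintro n ⟨S, hS, rfl⟩
    exact minCard hS
  have hDle : DavenportConstant G ≤ Fintype.card G := by
    apply csSup_le hDne
    rintro n ⟨S, hS, rfl⟩
    exact minCard hS
  have hDge : ∀ S : Multiset G, IsMinZeroSum S →
      Multiset.card S ≤ DavenportConstant G := by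
    intro S hS
    exact le_csSup hbdd ⟨S, hS, rfl⟩
  -- Case: G cyclic
  by_cases hcyc : ∀ z : G, z ∈ C
  · exfalso
    have hcard : Fintype.card G = e := by
      have h1 : C = ⊤ := AddSubgroup.eq_top_iff' C |>.mpr hcyc
      calc Fintype.card G = Nat.card G := (Nat.card_eq_fintype_card).symm
        _ = Nat.card C := by rw [h1]; exact (AddSubgroup.card_top).symm
        _ = addOrderOf g := Nat.card_zmultiples g
        _ = e := hg
    rw [hcard] at hDle
    omega
  push_neg at hcyc
  obtain ⟨x₀, hx₀⟩ := hcyc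
  -- every element outside C has order 2 in the quotient
  have hord2 : ∀ z : G, z ∉ C → addOrderOf (π z) = 2 := by
    intro z hz
    set m := addOrderOf (π z) with hm
    have hme : m ∣ e := by
      apply addOrderOf_dvd_of_nsmul_eq_zero
      rw [← _root_.map_nsmul, hesmul z, _root_.map_zero]
    have hm1 : m ≠ 1 := by
      intro hcon
      have : π z = 0 := by
        rw [← one_nsmul (π z), ← hcon]
        exact addOrderOf_nsmul_eq_zero (π z)
      exact hz ((hπ0 z).mp this)
    have hmpos : 0 < m := Nat.pos_of_dvd_of_pos hme hepos
    by_contra hne2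
    have hm3 : 3 ≤ m := by omega
    obtain ⟨x, hxeq, hxm⟩ := lift_lem hg hesmul hepos z
    have hxC : x ∉ C := by
      intro hcon
      have : π x = 0 := (hπ0 x).mpr hcon
      rw [hxeq] at this
      exact hz ((hπ0 z).mp this)
    have he2 : 2 ≤ e := le_trans (by omega) (Nat.le_of_dvd hepos hme)
    have hmx : addOrderOf (π x) = m := by rw [hxeq, ← hm]
    obtain ⟨hmin, hcard⟩ := cons1 hg he2 hxC hmx (by rw [← hm] at hxm; exact hxm) (by omega)
    have := hDge _ hmin
    rw [hcard, ← h] at this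
    omega
  have h2x₀ : addOrderOf (π x₀) = 2 := hord2 x₀ hx₀
  have h2e : 2 ∣ e := by
    have : addOrderOf (π x₀) ∣ e := by
      apply addOrderOf_dvd_of_nsmul_eq_zero
      rw [← _root_.map_nsmul, hesmul x₀, _root_.map_zero]
    rwa [h2x₀] at this
  have he2 : 2 ≤ e := Nat.le_of_dvd hepos h2e
  -- get a lift x of order 2
  obtain ⟨x, hxeq, hxm⟩ := lift_lem hg hesmul hepos x₀
  rw [h2x₀] at hxm
  have hxC : x ∉ C := by
    intro hcon
    have : π x = 0 := (hπ0 x).mpr hcon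
    rw [hxeq] at this
    exact hx₀ ((hπ0 x₀).mp this)
  -- Case: another coset exists
  by_cases htwo : ∃ y₀ : G, y₀ ∉ C ∧ π y₀ ≠ π x₀
  · exfalso
    obtain ⟨y₀, hy₀, hy₀x⟩ := htwo
    obtain ⟨y, hyeq, hym⟩ := lift_lem hg hesmul hepos y₀
    rw [hord2 y₀ hy₀] at hym
    have hyC : y ∉ C := by
      intro hcon
      have : π y = 0 := (hπ0 y).mpr hcon
      rw [hyeq] at this
      exact hy₀ ((hπ0 y₀).mp this)
    have hπxy : π x ≠ π y := by
      rw [hxeq, hyeq]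
      exact fun hcon => hy₀x hcon.symm
    obtain ⟨hmin, hcard⟩ := cons2 hg he2 hxC hyC hπxy hxm hym
    have := hDge _ hmin
    rw [hcard, ← h] at this
    omega
  push_neg at htwo
  -- now G = C ∪ (x + C); build the isomorphism
  have hNZ : NeZero e := ⟨by omega⟩
  have hx2 : ((2 : ℕ) : ℤ) • x = 0 := by rw [natCast_zsmul]; exact hxm
  have hge : ((e : ℕ) : ℤ) • g = 0 := by
    rw [natCast_zsmul, ← hg]; exact addOrderOf_nsmul_eq_zero g
  let f2 : ZMod 2 →+ G := ZMod.lift 2 ⟨zmultiplesHom G x, by simpa using hx2⟩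
  let fe : ZMod e →+ G := ZMod.lift e ⟨zmultiplesHom G g, by simpa using hge⟩
  let φ : ZMod 2 × ZMod e →+ G := f2.coprod fe
  have hf2_1 : f2 1 = x := by
    have : ((1 : ℤ) : ZMod 2) = 1 := by norm_cast
    rw [← this]
    show (ZMod.lift 2 ⟨zmultiplesHom G x, _⟩) ((1 : ℤ) : ZMod 2) = x
    rw [ZMod.lift_coe]
    simp
  have hfe_int : ∀ k : ℤ, fe ((k : ℤ) : ZMod e) = k • g := by
    intro k
    show (ZMod.lift e ⟨zmultiplesHom G g, _⟩) ((k : ℤ) : ZMod e) = k • g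
    rw [ZMod.lift_coe]
    simp
  have hfe_mem : ∀ b : ZMod e, fe b ∈ C := by
    intro b
    have hb : ((b.val : ℤ) : ZMod e) = b := by
      rw [Int.cast_natCast, ZMod.natCast_val, ZMod.cast_id]
    rw [← hb, hfe_int]
    exact AddSubgroup.mem_zmultiples_iff.mpr ⟨(b.val : ℤ), rfl⟩
  have hinj : Function.Injective φ := by
    rw [injective_iff_map_eq_zero]
    rintro ⟨a, b⟩ hab
    have hφab : f2 a + fe b = 0 := hab
    have ha01 : a = 0 ∨ a = 1 := by
      have : ∀ c : ZMod 2, c = 0 ∨ c = 1 := by decide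
      exact this a
    rcases ha01 with ha | ha
    · rw [ha, _root_.map_zero, zero_add] at hφab
      have hb0 : b = 0 := by
        have hb : ((b.val : ℤ) : ZMod e) = b := by
          rw [Int.cast_natCast, ZMod.natCast_val, ZMod.cast_id]
        rw [← hb, hfe_int] at hφab
        have : (e : ℤ) ∣ (b.val : ℤ) := by
          have h' : ((addOrderOf g : ℕ) : ℤ) ∣ (b.val : ℤ) :=
            addOrderOf_dvd_iff_zsmul_eq_zero.mpr hφab
          rwa [hg] at h'
        have : (e : ℕ) ∣ b.val := Int.ofNat_dvd.mp this
        have hv := ZMod.val_lt b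
        have : b.val = 0 := by
          rcases Nat.eq_zero_or_pos b.val with h0 | h0
          · exact h0
          · have := Nat.le_of_dvd h0 this; omega
        exact (ZMod.val_eq_zero b).mp this
      rw [ha, hb0]
      rfl
    · exfalso
      rw [ha, hf2_1] at hφab
      apply hxC
      have : x = -fe b := by linear_combination (norm := abel) hφab
      rw [this]
      exact C.neg_mem (hfe_mem b)
  have hsurj : Function.Surjective φ := by
    intro z
    by_cases hz : z ∈ C
    · obtain ⟨k, hk⟩ := AddSubgroup.mem_zmultiples_iff.mp hz
      refine ⟨(0, ((k : ℤ) : ZMod e)), ?_⟩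
      show f2 0 + fe ((k : ℤ) : ZMod e) = z
      rw [_root_.map_zero, zero_add, hfe_int, hk]
    · have hzx : π z = π x₀ := htwo z hz
      have : z - x ∈ C := by
        rw [← hπ0]
        rw [_root_.map_sub, hzx, hxeq, sub_self]
      obtain ⟨k, hk⟩ := AddSubgroup.mem_zmultiples_iff.mp this
      refine ⟨(1, ((k : ℤ) : ZMod e)), ?_⟩
      show f2 1 + fe ((k : ℤ) : ZMod e) = z
      rw [hf2_1, hfe_int, hk]
      abel
  obtain ⟨n, hn⟩ : ∃ n, e = 2 * n := h2e
  refine ⟨n, by omega, ?_⟩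
  have : G ≃+ ZMod 2 × ZMod e := (AddEquiv.ofBijective φ ⟨hinj, hsurj⟩).symm
  rw [hn] at this
  exact ⟨this⟩
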